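/- Let Γ act by isometries on metric spaces Y and Z with homomorphisms ρ and σ, and α ∈ Isom(Y), and suppose the diagonal action Δ(ρ, ρ_α, σ) on Y × Y × Z (ℓ^∞ metric) is acylindrical, where ρ_α(g) = αρ(g)α⁻¹. Then the diagonal action Δ(ρ, σ) on Y × Z is acylindrical. -/
import Mathlib


section

variable {Γ Y Z : Type*} [Group Γ] [MetricSpace Y] [MetricSpace Z]

/-- Joint ε-coarse stabilizer for the diagonal action Δ(ρ,σ) on Y × Z (max metric). -/
def setEps2 (ρ : Γ →* (Y ≃ᵢ Y)) (σ : Γ →* (Z ≃ᵢ Z)) (ε : ℝ) (p q : Y × Z) : Set Γ :=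
  {g : Γ | dist ((ρ g p.1, σ g p.2) : Y × Z) p ≤ ε ∧
    dist ((ρ g q.1, σ g q.2) : Y × Z) q ≤ ε}

/-- Joint ε-coarse stabilizer for the diagonal action Δ(ρ, ρ_α, σ) on Y × Y × Z, where
ρ_α(g) = α ρ(g) α⁻¹. -/
def setEps3 (ρ : Γ →* (Y ≃ᵢ Y)) (α : Y ≃ᵢ Y) (σ : Γ →* (Z ≃ᵢ Z)) (ε : ℝ)
    (p q : Y × Y × Z) : Set Γ :=
  {g : Γ | dist ((ρ g p.1, α (ρ g (α.symm p.2.1)), σ g p.2.2) : Y × Y × Z) p ≤ ε ∧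
    dist ((ρ g q.1, α (ρ g (α.symm q.2.1)), σ g q.2.2) : Y × Y × Z) q ≤ ε}

/-- Acylindricity of the diagonal action on Y × Z. -/
def IsAcylindrical2 (ρ : Γ →* (Y ≃ᵢ Y)) (σ : Γ →* (Z ≃ᵢ Z)) : Prop :=
  ∀ ε > (0:ℝ), ∃ R : ℝ, ∃ N : ℕ, ∀ p q : Y × Z, R ≤ dist p q →
    (setEps2 ρ σ ε p q).Finite ∧ (setEps2 ρ σ ε p q).ncard ≤ N

/-- Acylindricity of the diagonal action on Y × Y × Z. -/
def IsAcylindrical3 (ρ : Γ →* (Y ≃ᵢ Y)) (α : Y ≃ᵢ Y) (σ : Γ →* (Z ≃ᵢ Z)) : Prop :=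
  ∀ ε > (0:ℝ), ∃ R : ℝ, ∃ N : ℕ, ∀ p q : Y × Y × Z, R ≤ dist p q →
    (setEps3 ρ α σ ε p q).Finite ∧ (setEps3 ρ α σ ε p q).ncard ≤ N

/-- If the duplicated diagonal action Δ(ρ, ρ_α, σ) on Y × Y × Z is
acylindrical then so is the diagonal action Δ(ρ,σ) on Y × Z. -/
theorem stmt18 (ρ : Γ →* (Y ≃ᵢ Y)) (σ : Γ →* (Z ≃ᵢ Z)) (α : Y ≃ᵢ Y)
    (h : IsAcylindrical3 ρ α σ) : IsAcylindrical2 ρ σ := by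
  intro ε hε
  obtain ⟨R, N, hRN⟩ := h ε hε
  refine ⟨R, N, fun p q hpq => ?_⟩
  have hdist : dist ((p.1, α p.1, p.2) : Y × Y × Z) (q.1, α q.1, q.2) = dist p q := by
    simp [Prod.dist_eq, α.dist_eq, max_self, ← max_assoc]
  have hset : setEps2 ρ σ ε p q = setEps3 ρ α σ ε (p.1, α p.1, p.2) (q.1, α q.1, q.2) := by
    ext g
    simp only [setEps2, setEps3, Set.mem_setOf_eq, Prod.dist_eq, α.symm_apply_apply,
      α.dist_eq, sup_le_iff]
    tauto
  rw [hset]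
  exact hRN _ _ (hdist ▸ hpq)

end
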